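/- Let G = (ℤ/2ℤ)^n, let A ⊆ G, let H ≤ G, and let ε ∈ (0, 1/2). Define ind(A;H) = (1/N) Σ_{g∈G} (|A_H^{+g}|/|H|)², where A_H^{+g}(x) = A(x+g) for x ∈ H and N = |G|. If H is not ε-regular for A (i.e. the number of g ∈ G for which sup_{η≠0}|Â_H^{+g}(η)| > ε|H| exceeds εN), then there exists a subgroup H' ≤ H with |G/H'| ≤ 2^{|G/H|} and ind(A;H') ≥ ind(A;H) + ε³. -/

import Mathlib

/-- Fourier coefficient on a subgroup `H ≤ (ℤ/2ℤ)ⁿ` of `A_H^{+g}` at `η ∈ H*`. -/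
noncomputable def fcoef {n : ℕ} (A : Set (Fin n → ZMod 2))
    (H : AddSubgroup (Fin n → ZMod 2)) (g : Fin n → ZMod 2) (η : H →+ ZMod 2) : ℝ :=
  ∑ᶠ x : H, Set.indicator A (fun _ => (1 : ℝ)) ((x : Fin n → ZMod 2) + g) *
    (-1 : ℝ) ^ (η x).val

/-- `g` is an `ε`-regular value for `A` with respect to `H`:
`sup_{η ≠ 0} |Â_H^{+g}(η)| ≤ ε|H|`. -/
def IsRegularValue {n : ℕ} (ε : ℝ) (A : Set (Fin n → ZMod 2))
    (H : AddSubgroup (Fin n → ZMod 2)) (g : Fin n → ZMod 2) : Prop :=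
  ∀ η : H →+ ZMod 2, η ≠ 0 → |fcoef A H g η| ≤ ε * Nat.card H

/-- The index `ind(A;H) = (1/N) Σ_{g ∈ G} (|A_H^{+g}|/|H|)²`. -/
noncomputable def ind {n : ℕ} (A : Set (Fin n → ZMod 2))
    (H : AddSubgroup (Fin n → ZMod 2)) : ℝ :=
  (1 / (Fintype.card (Fin n → ZMod 2) : ℝ)) *
    ∑ g : Fin n → ZMod 2,
      ((Nat.card {x : H // (x : Fin n → ZMod 2) + g ∈ A} : ℝ) / Nat.card H) ^ 2


open Finset

variable {n : ℕ}

noncomputable instance {M : Type*} [AddGroup M] [Finite M] (K : AddSubgroup M) : Fintype ↥K :=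
  Fintype.ofFinite _


variable {n : ℕ}

noncomputable instance {M : Type*} [AddGroup M] [Finite M] (K : AddSubgroup M) : Fintype ↥K :=
  Fintype.ofFinite _

/-- real indicator -/
noncomputable def mu (A : Set (Fin n → ZMod 2)) (x : Fin n → ZMod 2) : ℝ :=
  Set.indicator A (fun _ => (1 : ℝ)) x

lemma mu_nonneg (A : Set (Fin n → ZMod 2)) (x) : 0 ≤ mu A x := by
  unfold mu; exact Set.indicator_nonneg (fun _ _ => zero_le_one) x

noncomputable def cnt (A : Set (Fin n → ZMod 2)) (K : AddSubgroup (Fin n → ZMod 2))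
    (g : Fin n → ZMod 2) : ℝ := (Nat.card {x : K // (x : Fin n → ZMod 2) + g ∈ A} : ℝ)

lemma cnt_eq_sum (A : Set (Fin n → ZMod 2)) (K : AddSubgroup (Fin n → ZMod 2)) (g) :
    cnt A K g = ∑ x : K, mu A ((x : Fin n → ZMod 2) + g) := by
  classical
  unfold cnt mu
  rw [Nat.card_eq_fintype_card, Fintype.card_subtype]
  rw [Finset.card_filter]
  push_cast
  refine Finset.sum_congr rfl fun x _ => ?_
  by_cases h : (x : Fin n → ZMod 2) + g ∈ A <;> simp [h]

lemma add_self_G (x : Fin n → ZMod 2) : x + x = 0 := by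
  funext i
  have : ∀ a : ZMod 2, a + a = 0 := by decide
  simpa using this (x i)

lemma add_self_H {K : AddSubgroup (Fin n → ZMod 2)} (x : K) : x + x = 0 := by
  have : ((x + x : K) : Fin n → ZMod 2) = ((0 : K) : Fin n → ZMod 2) := by
    push_cast
    exact add_self_G _
  exact Subtype.coe_injective this

/-- translation invariance of `cnt` by an element of the subgroup -/
lemma cnt_translate (A : Set (Fin n → ZMod 2)) (K : AddSubgroup (Fin n → ZMod 2))
    {s : Fin n → ZMod 2} (hs : s ∈ K) (g) : cnt A K (s + g) = cnt A K g := by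
  rw [cnt_eq_sum, cnt_eq_sum]
  refine Fintype.sum_equiv (Equiv.addLeft (⟨s, hs⟩ : K)) _ _ fun x => ?_
  simp only [Equiv.coe_addLeft]
  congr 1
  push_cast
  ring

/-- translation invariance of a sum over a subgroup -/
lemma sum_translate_K (K : AddSubgroup (Fin n → ZMod 2)) (F : (Fin n → ZMod 2) → ℝ)
    {s : Fin n → ZMod 2} (hs : s ∈ K) :
    ∑ t : K, F (s + (t : Fin n → ZMod 2)) = ∑ t : K, F t := by
  refine Fintype.sum_equiv (Equiv.addLeft (⟨s, hs⟩ : K)) _ _ fun x => ?_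
  simp only [Equiv.coe_addLeft]
  push_cast
  ring_nf

lemma sum_translate_G (F : (Fin n → ZMod 2) → ℝ) (s : Fin n → ZMod 2) :
    ∑ g : Fin n → ZMod 2, F (s + g) = ∑ g, F g :=
  Fintype.sum_equiv (Equiv.addLeft s) _ _ fun x => rfl

lemma fcoef_eq_sum (A : Set (Fin n → ZMod 2)) (H : AddSubgroup (Fin n → ZMod 2)) (g)
    (η : H →+ ZMod 2) :
    fcoef A H g η = ∑ x : H, mu A ((x : Fin n → ZMod 2) + g) * (-1 : ℝ) ^ (η x).val := by
  unfold fcoef mu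
  exact finsum_eq_sum_of_fintype _


lemma cnt_nonneg (A : Set (Fin n → ZMod 2)) (K : AddSubgroup (Fin n → ZMod 2)) (g) :
    0 ≤ cnt A K g := Nat.cast_nonneg _

lemma card_pos' (K : AddSubgroup (Fin n → ZMod 2)) : (0 : ℝ) < (Nat.card K : ℝ) := by
  have : 0 < Nat.card K := Nat.card_pos
  exact_mod_cast this

/-- averaging: `cnt A H₁ g * |H₂| = ∑_{t ∈ H₁} cnt A H₂ (t+g)` for `H₂ ≤ H₁`. -/
lemma cnt_avg (A : Set (Fin n → ZMod 2)) {H₁ H₂ : AddSubgroup (Fin n → ZMod 2)}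
    (h12 : H₂ ≤ H₁) (g) :
    cnt A H₁ g * (Nat.card H₂ : ℝ) = ∑ t : H₁, cnt A H₂ ((t : Fin n → ZMod 2) + g) := by
  have : ∀ t : H₁, cnt A H₂ ((t : Fin n → ZMod 2) + g)
      = ∑ x : H₂, mu A ((x : Fin n → ZMod 2) + ((t : Fin n → ZMod 2) + g)) :=
    fun t => cnt_eq_sum _ _ _
  rw [Finset.sum_congr rfl (fun t _ => this t), Finset.sum_comm]
  have : ∀ x : H₂, ∑ t : H₁, mu A ((x : Fin n → ZMod 2) + ((t : Fin n → ZMod 2) + g))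
      = cnt A H₁ g := by
    intro x
    have h1 : ∑ t : H₁, mu A ((x : Fin n → ZMod 2) + ((t : Fin n → ZMod 2) + g))
        = ∑ t : H₁, mu A ((t : Fin n → ZMod 2) + ((x : Fin n → ZMod 2) + g)) := by
      refine Finset.sum_congr rfl fun t _ => ?_
      congr 1
      ring
    rw [h1, ← cnt_eq_sum, cnt_translate A H₁ (h12 x.2) g]
  rw [Finset.sum_congr rfl (fun x _ => this x), Finset.sum_const, Finset.card_univ]
  simp [Nat.card_eq_fintype_card, mul_comm]

/-- pointwise monotonicity step via Cauchy–Schwarz. -/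
lemma point_mono (A : Set (Fin n → ZMod 2)) {H₁ H₂ : AddSubgroup (Fin n → ZMod 2)}
    (h12 : H₂ ≤ H₁) (g) :
    (cnt A H₁ g / Nat.card H₁) ^ 2
      ≤ (1 / (Nat.card H₁ : ℝ)) *
        ∑ t : H₁, (cnt A H₂ ((t : Fin n → ZMod 2) + g) / Nat.card H₂) ^ 2 := by
  have c1 := card_pos' H₁
  have c2 := card_pos' H₂
  have havg := cnt_avg A h12 g
  have hCS : (∑ t : H₁, cnt A H₂ ((t : Fin n → ZMod 2) + g)) ^ 2
      ≤ (Nat.card H₁ : ℝ) * ∑ t : H₁, cnt A H₂ ((t : Fin n → ZMod 2) + g) ^ 2 := by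
    have := sq_sum_le_card_mul_sum_sq (s := (Finset.univ : Finset H₁))
      (f := fun t => cnt A H₂ ((t : Fin n → ZMod 2) + g))
    simpa [Nat.card_eq_fintype_card, Finset.card_univ] using this
  have key : (cnt A H₁ g * (Nat.card H₂ : ℝ)) ^ 2
      ≤ (Nat.card H₁ : ℝ) * ∑ t : H₁, cnt A H₂ ((t : Fin n → ZMod 2) + g) ^ 2 := by
    rw [havg]; exact hCS
  have hsum : ∑ t : H₁, (cnt A H₂ ((t : Fin n → ZMod 2) + g) / Nat.card H₂) ^ 2
      = (∑ t : H₁, cnt A H₂ ((t : Fin n → ZMod 2) + g) ^ 2) / (Nat.card H₂ : ℝ) ^ 2 := by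
    rw [Finset.sum_div]
    exact Finset.sum_congr rfl fun t _ => by rw [div_pow]
  rw [hsum, div_pow]
  rw [div_le_iff₀ (by positivity)]
  have expand : 1 / (Nat.card H₁ : ℝ) * ((∑ t : H₁, cnt A H₂ ((t : Fin n → ZMod 2) + g) ^ 2) / (Nat.card H₂ : ℝ) ^ 2) * (Nat.card H₁ : ℝ) ^ 2
      = ((Nat.card H₁ : ℝ) * ∑ t : H₁, cnt A H₂ ((t : Fin n → ZMod 2) + g) ^ 2) / (Nat.card H₂ : ℝ) ^ 2 := by
    field_simp
  rw [expand, le_div_iff₀ (by positivity)]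
  nlinarith [key]

section Eta

variable {H : AddSubgroup (Fin n → ZMod 2)} (η : ↥H →+ ZMod 2)

lemma sum_map_subtype (K' : AddSubgroup ↥H) (F : (Fin n → ZMod 2) → ℝ) :
    ∑ x : (K'.map H.subtype), F (x : Fin n → ZMod 2) = ∑ y : K', F ((y : ↥H) : Fin n → ZMod 2) := by
  refine (Fintype.sum_equiv
    (AddSubgroup.equivMapOfInjective K' H.subtype H.subtype_injective).toEquiv _ _
    fun y => ?_).symm
  have h2 := AddSubgroup.coe_equivMapOfInjective_apply K' H.subtype H.subtype_injective y
  congr 1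

variable {t₀ : ↥H} (ht₀ : η t₀ = 1)

lemma zmod_ne_zero {a : ZMod 2} (h : ¬ a = 0) : a = 1 := by revert h; revert a; decide

include ht₀ in
lemma sum_eta_split (F : ↥H → ℝ) :
    ∑ t : ↥H, F t
      = ∑ t ∈ Finset.univ.filter (fun t : ↥H => η t = 0), (F t + F (t + t₀)) := by
  classical
  rw [← Finset.sum_filter_add_sum_filter_not Finset.univ (fun t : ↥H => η t = 0) F,
    Finset.sum_add_distrib]
  congr 1
  refine Finset.sum_nbij' (fun t => t + t₀) (fun t => t + t₀) ?_ ?_ ?_ ?_ ?_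
  · intro t ht
    simp only [Finset.mem_filter, Finset.mem_univ, true_and] at ht ⊢
    rw [map_add, ht₀, zmod_ne_zero ht]
    decide
  · intro t ht
    simp only [Finset.mem_filter, Finset.mem_univ, true_and] at ht ⊢
    rw [map_add, ht₀, ht]
    decide
  · intro t _
    show t + t₀ + t₀ = t
    rw [add_assoc, add_self_H, add_zero]
  · intro t _
    show t + t₀ + t₀ = t
    rw [add_assoc, add_self_H, add_zero]
  · intro t _
    show F t = F (t + t₀ + t₀)
    rw [add_assoc, add_self_H, add_zero]

lemma sum_filter0_eq (F : (Fin n → ZMod 2) → ℝ) :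
    ∑ t ∈ Finset.univ.filter (fun t : ↥H => η t = 0), F (t : Fin n → ZMod 2)
      = ∑ x : (η.ker.map H.subtype), F (x : Fin n → ZMod 2) := by
  classical
  have hmem : ∀ t : ↥H, η t = 0 → (t : Fin n → ZMod 2) ∈ η.ker.map H.subtype := by
    intro t ht
    exact AddSubgroup.mem_map.mpr ⟨t, by rw [AddMonoidHom.mem_ker]; exact ht, rfl⟩
  refine Finset.sum_bij'
    (fun (t : ↥H) (ht : t ∈ Finset.univ.filter (fun t : ↥H => η t = 0)) =>
      (⟨(t : Fin n → ZMod 2), hmem t (by simpa using ht)⟩ : ↥(η.ker.map H.subtype)))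
    (fun x _ => (⟨(x : Fin n → ZMod 2), AddSubgroup.map_subtype_le _ x.2⟩ : ↥H))
    ?_ ?_ ?_ ?_ ?_
  · intro a ha
    exact Finset.mem_univ _
  · intro x _
    simp only [Finset.mem_filter, Finset.mem_univ, true_and]
    obtain ⟨y, hy, hyx⟩ := AddSubgroup.mem_map.mp x.2
    have : (⟨(x : Fin n → ZMod 2), AddSubgroup.map_subtype_le _ x.2⟩ : ↥H) = y := by
      apply Subtype.coe_injective
      simpa using hyx.symm
    rw [this]
    simpa [AddMonoidHom.mem_ker] using hy
  · intro a ha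
    rfl
  · intro x hx
    rfl
  · intro a ha
    rfl

lemma card_filter0 : ((Finset.univ.filter (fun t : ↥H => η t = 0)).card : ℝ)
    = (Nat.card (η.ker.map H.subtype) : ℝ) := by
  classical
  have h := sum_filter0_eq η (fun _ => (1 : ℝ))
  rw [Finset.sum_const, Finset.sum_const, nsmul_eq_mul, nsmul_eq_mul, mul_one, mul_one] at h
  rw [h, Finset.card_univ, Nat.card_eq_fintype_card]

end Eta

section Gain

variable {H : AddSubgroup (Fin n → ZMod 2)} {η : ↥H →+ ZMod 2}

lemma exists_t0 (hη : η ≠ 0) : ∃ t₀ : ↥H, η t₀ = 1 := by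
  by_contra h
  push_neg at h
  apply hη
  ext t
  by_cases h0 : η t = 0
  · simpa using h0
  · exact absurd (zmod_ne_zero h0) (h t)

lemma mem_Keta {t : ↥H} (ht : η t = 0) :
    (t : Fin n → ZMod 2) ∈ η.ker.map H.subtype :=
  AddSubgroup.mem_map.mpr ⟨t, by rw [AddMonoidHom.mem_ker]; exact ht, rfl⟩

/-- the two-value decomposition data -/
lemma eta_decomp (A : Set (Fin n → ZMod 2)) {t₀ : ↥H} (ht₀ : η t₀ = 1) (g : Fin n → ZMod 2) :
    (cnt A (η.ker.map H.subtype) g + cnt A (η.ker.map H.subtype) ((t₀ : Fin n → ZMod 2) + g)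
        = cnt A H g) ∧
    (cnt A (η.ker.map H.subtype) g - cnt A (η.ker.map H.subtype) ((t₀ : Fin n → ZMod 2) + g)
        = fcoef A H g η) ∧
    ((Nat.card H : ℝ) = 2 * (Nat.card (η.ker.map H.subtype) : ℝ)) := by
  classical
  set Kη := η.ker.map H.subtype with hK
  have coe_add : ∀ t : ↥H, ((t + t₀ : ↥H) : Fin n → ZMod 2) + g
      = (t : Fin n → ZMod 2) + ((t₀ : Fin n → ZMod 2) + g) := by
    intro t; push_cast; ring
  have hb : ∀ t : ↥H, η t = 0 →
      cnt A Kη (((t + t₀ : ↥H) : Fin n → ZMod 2) + g) = cnt A Kη ((t₀ : Fin n → ZMod 2) + g) := by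
    intro t ht
    rw [coe_add t]
    exact cnt_translate A Kη (mem_Keta ht) _
  have ha : ∀ t : ↥H, η t = 0 →
      cnt A Kη ((t : Fin n → ZMod 2) + g) = cnt A Kη g := by
    intro t ht
    exact cnt_translate A Kη (mem_Keta ht) g
  refine ⟨?_, ?_, ?_⟩
  · rw [cnt_eq_sum A H g, sum_eta_split η ht₀]
    rw [Finset.sum_add_distrib]
    congr 1
    · rw [sum_filter0_eq η (fun x => mu A (x + g)), hK]
      exact cnt_eq_sum A (η.ker.map H.subtype) g
    · have : ∀ t ∈ Finset.univ.filter (fun t : ↥H => η t = 0),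
          mu A (((t + t₀ : ↥H) : Fin n → ZMod 2) + g)
            = mu A ((t : Fin n → ZMod 2) + ((t₀ : Fin n → ZMod 2) + g)) := by
        intro t _; rw [coe_add t]
      rw [Finset.sum_congr rfl this,
        sum_filter0_eq η (fun x => mu A (x + ((t₀ : Fin n → ZMod 2) + g))), hK]
      exact cnt_eq_sum A (η.ker.map H.subtype) ((t₀ : Fin n → ZMod 2) + g)
  · rw [fcoef_eq_sum A H g η, sum_eta_split η ht₀ (fun t => mu A ((t : Fin n → ZMod 2) + g) * (-1 : ℝ) ^ (η t).val)]
    have term : ∀ t ∈ Finset.univ.filter (fun t : ↥H => η t = 0),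
        (mu A ((t : Fin n → ZMod 2) + g) * (-1 : ℝ) ^ (η t).val
          + mu A (((t + t₀ : ↥H) : Fin n → ZMod 2) + g) * (-1 : ℝ) ^ (η (t + t₀)).val)
        = mu A ((t : Fin n → ZMod 2) + g)
          - mu A ((t : Fin n → ZMod 2) + ((t₀ : Fin n → ZMod 2) + g)) := by
      intro t ht
      simp only [Finset.mem_filter, Finset.mem_univ, true_and] at ht
      rw [map_add, ht, ht₀, coe_add t]
      have hv : (1 : ZMod 2).val = 1 := rfl
      have hv0 : ((0 : ZMod 2)).val = 0 := rfl
      rw [zero_add, hv, hv0]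
      ring
    rw [Finset.sum_congr rfl term, Finset.sum_sub_distrib]
    rw [sum_filter0_eq η (fun x => mu A (x + g)),
      sum_filter0_eq η (fun x => mu A (x + ((t₀ : Fin n → ZMod 2) + g)))]
    rw [← cnt_eq_sum, ← cnt_eq_sum]
  · have h1 : ((Nat.card ↥H : ℝ)) = ∑ t : ↥H, (1 : ℝ) := by
      simp [Nat.card_eq_fintype_card]
    have h2 : ((Nat.card Kη : ℝ)) = ∑ x : Kη, (1 : ℝ) := by
      simp [Nat.card_eq_fintype_card]
    rw [h1, sum_eta_split η ht₀ (fun _ => (1:ℝ))]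
    rw [h2, ← sum_filter0_eq η (fun _ => (1:ℝ))]
    rw [Finset.sum_const, Finset.sum_const]
    push_cast
    ring

end Gain

section Combine

variable {H : AddSubgroup (Fin n → ZMod 2)} {η : ↥H →+ ZMod 2}

lemma step1 (A : Set (Fin n → ZMod 2)) {H' : AddSubgroup (Fin n → ZMod 2)}
    (hH' : H' ≤ η.ker.map H.subtype) (g : Fin n → ZMod 2) :
    ∑ t : ↥H, (cnt A (η.ker.map H.subtype) ((t : Fin n → ZMod 2) + g)
        / Nat.card (η.ker.map H.subtype)) ^ 2
      ≤ ∑ t : ↥H, (cnt A H' ((t : Fin n → ZMod 2) + g) / Nat.card H') ^ 2 := by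
  classical
  set Kη := η.ker.map H.subtype with hK
  have KleH : Kη ≤ H := AddSubgroup.map_subtype_le _
  have cK := card_pos' Kη
  calc ∑ t : ↥H, (cnt A Kη ((t : Fin n → ZMod 2) + g) / Nat.card Kη) ^ 2
      ≤ ∑ t : ↥H, (1 / (Nat.card Kη : ℝ)) *
          ∑ s : Kη, (cnt A H' ((s : Fin n → ZMod 2) + ((t : Fin n → ZMod 2) + g))
            / Nat.card H') ^ 2 :=
        Finset.sum_le_sum fun t _ => point_mono A hH' _
    _ = (1 / (Nat.card Kη : ℝ)) * ∑ s : Kη, ∑ t : ↥H,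
          (cnt A H' ((s : Fin n → ZMod 2) + ((t : Fin n → ZMod 2) + g)) / Nat.card H') ^ 2 := by
        rw [← Finset.mul_sum, Finset.sum_comm]
    _ = (1 / (Nat.card Kη : ℝ)) * ∑ s : Kη, ∑ t : ↥H,
          (cnt A H' ((t : Fin n → ZMod 2) + g) / Nat.card H') ^ 2 := by
        congr 1
        refine Finset.sum_congr rfl fun s _ => ?_
        have := sum_translate_K H
          (fun x => (cnt A H' (x + g) / (Nat.card H' : ℝ)) ^ 2) (KleH s.2)
        calc ∑ t : ↥H, (cnt A H' ((s : Fin n → ZMod 2) + ((t : Fin n → ZMod 2) + g))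
              / (Nat.card H' : ℝ)) ^ 2
            = ∑ t : ↥H, (cnt A H' (((s : Fin n → ZMod 2) + (t : Fin n → ZMod 2)) + g)
              / (Nat.card H' : ℝ)) ^ 2 := by
              refine Finset.sum_congr rfl fun t _ => ?_
              rw [add_assoc]
          _ = ∑ t : ↥H, (cnt A H' ((t : Fin n → ZMod 2) + g) / (Nat.card H' : ℝ)) ^ 2 := this
    _ = ∑ t : ↥H, (cnt A H' ((t : Fin n → ZMod 2) + g) / Nat.card H') ^ 2 := by
        rw [Finset.sum_const, Finset.card_univ, nsmul_eq_mul, Nat.card_eq_fintype_card,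
          ← mul_assoc, one_div, inv_mul_cancel₀ (by exact_mod_cast Fintype.card_pos.ne'), one_mul]

lemma point_gain (A : Set (Fin n → ZMod 2)) {H' : AddSubgroup (Fin n → ZMod 2)}
    (hη : η ≠ 0) (hH' : H' ≤ η.ker.map H.subtype) {ε : ℝ} (hε0 : 0 < ε)
    {g : Fin n → ZMod 2} (hf : ε * Nat.card H < |fcoef A H g η|) :
    (cnt A H g / Nat.card H) ^ 2 + ε ^ 2
      ≤ (1 / (Nat.card H : ℝ)) *
        ∑ t : ↥H, (cnt A H' ((t : Fin n → ZMod 2) + g) / Nat.card H') ^ 2 := by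
  classical
  obtain ⟨t₀, ht₀⟩ := exists_t0 hη
  obtain ⟨hab, hfc, hcard⟩ := eta_decomp (η := η) A ht₀ g
  set Kη := η.ker.map H.subtype with hK
  set a := cnt A Kη g with ha'
  set b := cnt A Kη ((t₀ : Fin n → ZMod 2) + g) with hb'
  have cK := card_pos' Kη
  have cH := card_pos' H
  have habs : (ε * (Nat.card H : ℝ)) ^ 2 ≤ (a - b) ^ 2 := by
    rw [← sq_abs (a - b)]
    have h0 : 0 ≤ ε * (Nat.card H : ℝ) := by positivity
    rw [hfc] at *
    nlinarith [abs_nonneg (fcoef A H g η)]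
  have hsplit : ∑ t : ↥H, (cnt A Kη ((t : Fin n → ZMod 2) + g) / (Nat.card Kη : ℝ)) ^ 2
      = (Nat.card Kη : ℝ) * ((a / Nat.card Kη) ^ 2 + (b / Nat.card Kη) ^ 2) := by
    rw [sum_eta_split η ht₀
      (fun t => (cnt A Kη ((t : Fin n → ZMod 2) + g) / (Nat.card Kη : ℝ)) ^ 2)]
    have hterm : ∀ t ∈ Finset.univ.filter (fun t : ↥H => η t = 0),
        ((cnt A Kη ((t : Fin n → ZMod 2) + g) / (Nat.card Kη : ℝ)) ^ 2
          + (cnt A Kη (((t + t₀ : ↥H) : Fin n → ZMod 2) + g) / (Nat.card Kη : ℝ)) ^ 2)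
        = (a / Nat.card Kη) ^ 2 + (b / Nat.card Kη) ^ 2 := by
      intro t ht
      simp only [Finset.mem_filter, Finset.mem_univ, true_and] at ht
      have h1 : cnt A Kη ((t : Fin n → ZMod 2) + g) = a := cnt_translate A Kη (mem_Keta ht) g
      have h2 : cnt A Kη (((t + t₀ : ↥H) : Fin n → ZMod 2) + g) = b := by
        have coe_add : ((t + t₀ : ↥H) : Fin n → ZMod 2) + g
            = (t : Fin n → ZMod 2) + ((t₀ : Fin n → ZMod 2) + g) := by push_cast; ring
        rw [coe_add]
        exact cnt_translate A Kη (mem_Keta ht) _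
      rw [h1, h2]
    rw [Finset.sum_congr rfl hterm, Finset.sum_const, nsmul_eq_mul, card_filter0]
  have hmono := step1 (η := η) A hH' g
  have main : (cnt A H g / Nat.card H) ^ 2 + ε ^ 2
      ≤ (1 / (Nat.card H : ℝ)) *
        ∑ t : ↥H, (cnt A Kη ((t : Fin n → ZMod 2) + g) / Nat.card Kη) ^ 2 := by
    rw [hsplit, ← hab, hcard]
    have hc2 : (0:ℝ) < 2 * (Nat.card Kη : ℝ) := by positivity
    rw [hcard] at habs
    have expand1 : ((a + b) / (2 * (Nat.card Kη : ℝ))) ^ 2 + ε ^ 2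
        ≤ 1 / (2 * (Nat.card Kη : ℝ)) *
          ((Nat.card Kη : ℝ) * ((a / Nat.card Kη) ^ 2 + (b / Nat.card Kη) ^ 2)) := by
      have e1 : 1 / (2 * (Nat.card Kη : ℝ)) *
          ((Nat.card Kη : ℝ) * ((a / Nat.card Kη) ^ 2 + (b / Nat.card Kη) ^ 2))
          = (a ^ 2 + b ^ 2) / (2 * (Nat.card Kη : ℝ) ^ 2) := by
        field_simp
      have e2 : ((a + b) / (2 * (Nat.card Kη : ℝ))) ^ 2
          = (a + b) ^ 2 / (4 * (Nat.card Kη : ℝ) ^ 2) := by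
        rw [div_pow]; ring_nf
      rw [e1, e2]
      rw [div_add' _ _ _ (by positivity), div_le_div_iff₀ (by positivity) (by positivity)]
      nlinarith [habs, sq_nonneg (a - b), cK]
    exact expand1
  calc (cnt A H g / Nat.card H) ^ 2 + ε ^ 2
      ≤ (1 / (Nat.card H : ℝ)) *
        ∑ t : ↥H, (cnt A Kη ((t : Fin n → ZMod 2) + g) / Nat.card Kη) ^ 2 := main
    _ ≤ (1 / (Nat.card H : ℝ)) *
        ∑ t : ↥H, (cnt A H' ((t : Fin n → ZMod 2) + g) / Nat.card H') ^ 2 := by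
        apply mul_le_mul_of_nonneg_left hmono (by positivity)

end Combine

section Translate

variable {H : AddSubgroup (Fin n → ZMod 2)}

lemma sign_add (a b : ZMod 2) :
    ((-1:ℝ)) ^ ((a + b).val) = (-1:ℝ) ^ (a.val) * (-1:ℝ) ^ (b.val) := by
  have h : ∀ x : ZMod 2, x = 0 ∨ x = 1 := by decide
  rcases h a with ha | ha <;> rcases h b with hb | hb <;> subst ha <;> subst hb <;>
    norm_num [show ((0:ZMod 2)+0).val = 0 from rfl, show ((0:ZMod 2)+1).val = 1 from rfl,
      show ((1:ZMod 2)+0).val = 1 from rfl, show ((1:ZMod 2)+1).val = 0 from rfl,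
      show (0:ZMod 2).val = 0 from rfl, show (1:ZMod 2).val = 1 from rfl,
      show ((2:ZMod 2)).val = 0 from rfl]

lemma fcoef_translate (A : Set (Fin n → ZMod 2)) {s : Fin n → ZMod 2} (hs : s ∈ H)
    (g : Fin n → ZMod 2) (η : ↥H →+ ZMod 2) :
    |fcoef A H (s + g) η| = |fcoef A H g η| := by
  have key : fcoef A H (s + g) η
      = (-1:ℝ) ^ ((η ⟨s, hs⟩).val) * fcoef A H g η := by
    rw [fcoef_eq_sum, fcoef_eq_sum, Finset.mul_sum]
    refine Fintype.sum_equiv (Equiv.addLeft (⟨s, hs⟩ : ↥H)) _ _ fun x => ?_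
    simp only [Equiv.coe_addLeft]
    rw [map_add, sign_add]
    have harg : ((⟨s, hs⟩ + x : ↥H) : Fin n → ZMod 2) + g
        = (x : Fin n → ZMod 2) + (s + g) := by
      push_cast
      ring
    rw [harg]
    have hc : ((-1:ℝ)) ^ ((η ⟨s, hs⟩).val) * ((-1:ℝ)) ^ ((η ⟨s, hs⟩).val) = 1 := by
      rw [← pow_add, ← two_mul, pow_mul]
      norm_num
    linear_combination (-(mu A ((x : Fin n → ZMod 2) + (s + g)) * (-1:ℝ) ^ ((η x).val))) * hc
  rw [key, abs_mul, abs_pow, abs_neg, abs_one, one_pow, one_mul]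

lemma regular_translate (ε : ℝ) (A : Set (Fin n → ZMod 2)) {s : Fin n → ZMod 2}
    (hs : s ∈ H) (g : Fin n → ZMod 2) :
    IsRegularValue ε A H (s + g) ↔ IsRegularValue ε A H g := by
  unfold IsRegularValue
  refine forall_congr' fun η => imp_congr_right fun _ => ?_
  rw [fcoef_translate A hs g η]

lemma not_regular_exists {ε : ℝ} {A : Set (Fin n → ZMod 2)} {g : Fin n → ZMod 2}
    (h : ¬ IsRegularValue ε A H g) :
    ∃ η : ↥H →+ ZMod 2, η ≠ 0 ∧ ε * Nat.card H < |fcoef A H g η| := by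
  unfold IsRegularValue at h
  push_neg at h
  obtain ⟨η, hη, hlt⟩ := h
  exact ⟨η, hη, hlt⟩

end Translate

section Fiber

variable {H : AddSubgroup (Fin n → ZMod 2)}

noncomputable instance : Fintype ((Fin n → ZMod 2) ⧸ H) := Fintype.ofFinite _

lemma fiber_card_nat (q : (Fin n → ZMod 2) ⧸ H) :
    Nat.card {g : Fin n → ZMod 2 // (QuotientAddGroup.mk g : (Fin n → ZMod 2) ⧸ H) = q}
      = Nat.card H := by
  have hout : (QuotientAddGroup.mk (q.out) : (Fin n → ZMod 2) ⧸ H) = q :=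
    QuotientAddGroup.out_eq' q
  refine Nat.card_congr ?_
  refine
    { toFun := fun g => ⟨(g : Fin n → ZMod 2) - q.out, ?_⟩
      invFun := fun h => ⟨q.out + (h : Fin n → ZMod 2), ?_⟩
      left_inv := ?_
      right_inv := ?_ }
  · obtain ⟨g, hg⟩ := g
    have h2 : (QuotientAddGroup.mk q.out : (Fin n → ZMod 2) ⧸ H) = QuotientAddGroup.mk g := by
      rw [hout, hg]
    have h3 := QuotientAddGroup.eq.mp h2
    have h4 : g - q.out = -q.out + g := by abel
    rw [h4]
    exact h3
  · have h5 : -(q.out + (h : Fin n → ZMod 2)) + q.out = -(h : Fin n → ZMod 2) := by abel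
    have : (QuotientAddGroup.mk (q.out + (h : Fin n → ZMod 2)) : (Fin n → ZMod 2) ⧸ H)
        = QuotientAddGroup.mk q.out := by
      refine QuotientAddGroup.eq.mpr ?_
      rw [h5]
      exact neg_mem h.2
    rw [this, hout]
  · intro g
    apply Subtype.coe_injective
    show q.out + ((g : Fin n → ZMod 2) - q.out) = (g : Fin n → ZMod 2)
    abel
  · intro h
    apply Subtype.coe_injective
    show (q.out + (h : Fin n → ZMod 2)) - q.out = (h : Fin n → ZMod 2)
    abel

end Fiber

lemma ind_eq (A : Set (Fin n → ZMod 2)) (K : AddSubgroup (Fin n → ZMod 2)) :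
    ind A K = (1 / (Fintype.card (Fin n → ZMod 2) : ℝ)) *
      ∑ g : Fin n → ZMod 2, (cnt A K g / Nat.card K) ^ 2 := rfl

theorem index_increment' {n : ℕ} (A : Set (Fin n → ZMod 2))
    (H : AddSubgroup (Fin n → ZMod 2)) (ε : ℝ) (hε0 : 0 < ε) (hε : ε < 1 / 2)
    (hirr : ε * (Fintype.card (Fin n → ZMod 2) : ℝ) <
      (Nat.card {g : Fin n → ZMod 2 // ¬ IsRegularValue ε A H g} : ℝ)) :
    ∃ H' : AddSubgroup (Fin n → ZMod 2), H' ≤ H ∧ H'.index ≤ 2 ^ H.index ∧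
      ind A H + ε ^ 3 ≤ ind A H' := by
  classical
  have cardH_pos : (0:ℝ) < (Nat.card ↥H : ℝ) := card_pos' H
  have hk0 : H.index ≠ 0 := AddSubgroup.index_ne_zero_of_finite
  have hkpos : (0:ℝ) < (H.index : ℝ) := by
    exact_mod_cast Nat.pos_of_ne_zero hk0
  have hNk : (Nat.card ↥H) * H.index = Fintype.card (Fin n → ZMod 2) := by
    rw [← Nat.card_eq_fintype_card]
    exact AddSubgroup.card_mul_index H
  have hNpos : (0:ℝ) < (Fintype.card (Fin n → ZMod 2) : ℝ) := by
    exact_mod_cast Fintype.card_pos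
  -- the irregular set and its image in the quotient
  set Irr : Finset (Fin n → ZMod 2) :=
    Finset.univ.filter (fun g => ¬ IsRegularValue ε A H g) with hIrrdef
  have hIrrcard : (Nat.card {g : Fin n → ZMod 2 // ¬ IsRegularValue ε A H g} : ℝ)
      = (Irr.card : ℝ) := by
    rw [Nat.card_eq_fintype_card, Fintype.card_subtype]
  set Img : Finset ((Fin n → ZMod 2) ⧸ H) :=
    Irr.image (fun g => (QuotientAddGroup.mk g : (Fin n → ZMod 2) ⧸ H)) with hImgdef
  have hfiltercard : ∀ q : (Fin n → ZMod 2) ⧸ H,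
      (Finset.univ.filter (fun g : Fin n → ZMod 2 =>
        (QuotientAddGroup.mk g : (Fin n → ZMod 2) ⧸ H) = q)).card = Nat.card ↥H := by
    intro q
    rw [← fiber_card_nat q, Nat.card_eq_fintype_card, Fintype.card_subtype]
  have hcount : Irr.card ≤ Nat.card ↥H * Img.card := by
    rw [Finset.card_eq_sum_card_fiberwise
      (f := fun g => (QuotientAddGroup.mk g : (Fin n → ZMod 2) ⧸ H)) (t := Img)
      (fun g hg => Finset.mem_image_of_mem _ hg)]
    calc ∑ q ∈ Img, (Irr.filter (fun g =>
          (QuotientAddGroup.mk g : (Fin n → ZMod 2) ⧸ H) = q)).card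
        ≤ ∑ _q ∈ Img, Nat.card ↥H := by
          refine Finset.sum_le_sum fun q _ => ?_
          calc (Irr.filter (fun g =>
                (QuotientAddGroup.mk g : (Fin n → ZMod 2) ⧸ H) = q)).card
              ≤ (Finset.univ.filter (fun g : Fin n → ZMod 2 =>
                (QuotientAddGroup.mk g : (Fin n → ZMod 2) ⧸ H) = q)).card :=
                Finset.card_le_card (Finset.filter_subset_filter _ (Finset.subset_univ Irr))
            _ = Nat.card ↥H := hfiltercard q
      _ = Nat.card ↥H * Img.card := by
          rw [Finset.sum_const, smul_eq_mul, mul_comm]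
  -- choose m cosets
  set m : ℕ := Nat.floor (ε * (H.index : ℝ)) + 1 with hmdef
  have hεk_lt_Img : ε * (H.index : ℝ) < (Img.card : ℝ) := by
    have h2 : ε * ((Nat.card ↥H : ℝ) * (H.index : ℝ)) < (Nat.card ↥H : ℝ) * (Img.card : ℝ) := by
      calc ε * ((Nat.card ↥H : ℝ) * (H.index : ℝ))
          = ε * (Fintype.card (Fin n → ZMod 2) : ℝ) := by
            congr 1
            exact_mod_cast congrArg (Nat.cast : ℕ → ℝ) hNk
        _ < (Nat.card {g : Fin n → ZMod 2 // ¬ IsRegularValue ε A H g} : ℝ) := hirr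
        _ = (Irr.card : ℝ) := hIrrcard
        _ ≤ (Nat.card ↥H : ℝ) * (Img.card : ℝ) := by exact_mod_cast hcount
    nlinarith [cardH_pos]
  have hmImg : m ≤ Img.card := by
    have : Nat.floor (ε * (H.index : ℝ)) < Img.card := by
      rw [Nat.floor_lt (by positivity)]
      exact hεk_lt_Img
    omega
  obtain ⟨T, hTsub, hTcard⟩ := Finset.exists_subset_card_eq hmImg
  -- representatives are irregular
  have hrepIrr : ∀ q ∈ T, ¬ IsRegularValue ε A H q.out := by
    intro q hq hreg
    obtain ⟨g, hgIrr, hgq⟩ := Finset.mem_image.mp (hTsub hq)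
    rw [hIrrdef, Finset.mem_filter] at hgIrr
    have hmkeq : (QuotientAddGroup.mk q.out : (Fin n → ZMod 2) ⧸ H) = QuotientAddGroup.mk g := by
      rw [QuotientAddGroup.out_eq' q, ← hgq]
    have hmem : -q.out + g ∈ H := QuotientAddGroup.eq.mp hmkeq
    have hsub : q.out - g ∈ H := by
      have : q.out - g = -(-q.out + g) := by abel
      rw [this]
      exact neg_mem hmem
    have hgeq : (q.out - g) + g = q.out := by abel
    refine hgIrr.2 ((regular_translate ε A hsub g).mp ?_)
    rwa [hgeq]
  -- choose characters
  set ηsel : ((Fin n → ZMod 2) ⧸ H) → (↥H →+ ZMod 2) := fun q =>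
    if h : ∃ η : ↥H →+ ZMod 2, η ≠ 0 ∧ ε * Nat.card ↥H < |fcoef A H q.out η|
    then h.choose else 0 with hηdef
  have hηsel : ∀ q ∈ T, (ηsel q) ≠ 0 ∧ ε * Nat.card ↥H < |fcoef A H q.out (ηsel q)| := by
    intro q hq
    have hex := not_regular_exists (hrepIrr q hq)
    rw [hηdef]
    simp only [dif_pos hex]
    exact hex.choose_spec
  set KH : AddSubgroup ↥H := ⨅ q ∈ T, (ηsel q).ker with hKHdef
  refine ⟨KH.map H.subtype, AddSubgroup.map_subtype_le _, ?_, ?_⟩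
  · -- index bound
    have hKHindex : KH.index ≤ 2 ^ m := by
      have h1 : KH = ⨅ q : {q : (Fin n → ZMod 2) ⧸ H // q ∈ T}, (ηsel ↑q).ker := by
        rw [hKHdef, iInf_subtype]
      calc KH.index
          = (⨅ q : {q : (Fin n → ZMod 2) ⧸ H // q ∈ T}, (ηsel ↑q).ker).index := by rw [h1]
        _ ≤ ∏ q : {q : (Fin n → ZMod 2) ⧸ H // q ∈ T}, ((ηsel ↑q).ker).index :=
            AddSubgroup.index_iInf_le _
        _ ≤ ∏ _q : {q : (Fin n → ZMod 2) ⧸ H // q ∈ T}, 2 := by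
            refine Finset.prod_le_prod' fun q _ => ?_
            rw [AddSubgroup.index_ker]
            calc Nat.card ((ηsel ↑q).range) ≤ Nat.card (ZMod 2) :=
                Nat.card_le_card_of_injective _ Subtype.val_injective
              _ = 2 := by simp [Nat.card_eq_fintype_card]
        _ = 2 ^ m := by
            rw [Finset.prod_const, Finset.card_univ, Fintype.card_coe, hTcard]
    have hdvd : H.index ∣ 2 ^ n := by
      have h2 := AddSubgroup.index_dvd_card (H := H)
      rwa [show Nat.card (Fin n → ZMod 2) = 2 ^ n by simp [Nat.card_eq_fintype_card]] at h2
    obtain ⟨κ, hκle, hκ⟩ := (Nat.dvd_prime_pow Nat.prime_two).mp hdvd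
    have harith : 2 ^ m * H.index ≤ 2 ^ H.index := by
      rcases Nat.eq_zero_or_pos κ with h0 | hκpos
      · subst h0
        simp only [pow_zero] at hκ
        have hfl : Nat.floor (ε * (H.index : ℝ)) = 0 := by
          apply Nat.floor_eq_zero.mpr
          rw [hκ]
          push_cast
          linarith
        rw [hκ, hmdef, hfl]
        norm_num
      · have hpow2 : 2 ^ (κ-1) * 2 = 2 ^ κ := by
          rw [← pow_succ]
          congr 1
          omega
        have hm2 : m ≤ 2 ^ (κ-1) := by
          have hflt : Nat.floor (ε * (H.index : ℝ)) < 2 ^ (κ-1) := by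
            rw [Nat.floor_lt (by positivity)]
            have hkr : (H.index : ℝ) = (2:ℝ) ^ κ := by
              rw [hκ]
              push_cast
              rfl
            have h2n : (2:ℕ) ^ κ = 2 * 2 ^ (κ-1) := by omega
            have h2r : (2:ℝ) ^ κ = 2 * (2:ℝ) ^ (κ-1) := by exact_mod_cast h2n
            have hcast : ((2 ^ (κ-1) : ℕ) : ℝ) = (2:ℝ) ^ (κ-1) := by push_cast; rfl
            rw [hcast, hkr, h2r]
            nlinarith [pow_pos (by norm_num : (0:ℝ) < 2) (κ-1)]
          omega
        have hκ2 : κ ≤ 2 ^ (κ-1) := by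
          have := Nat.lt_two_pow_self (n := κ-1)
          omega
        calc 2 ^ m * H.index = 2 ^ m * 2 ^ κ := by rw [hκ]
          _ = 2 ^ (m + κ) := (pow_add 2 m κ).symm
          _ ≤ 2 ^ (2 ^ κ) := by
              apply Nat.pow_le_pow_right (by norm_num)
              omega
          _ = 2 ^ H.index := by rw [hκ]
    calc (KH.map H.subtype).index = KH.index * H.index := AddSubgroup.index_map_subtype KH
      _ ≤ 2 ^ m * H.index := Nat.mul_le_mul_right _ hKHindex
      _ ≤ 2 ^ H.index := harith
  · -- index increment
    set H' : AddSubgroup (Fin n → ZMod 2) := KH.map H.subtype with hH'def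
    have hH'le : H' ≤ H := AddSubgroup.map_subtype_le _
    have cardH'_pos : (0:ℝ) < (Nat.card ↥H' : ℝ) := card_pos' H'
    have key : ∀ g : Fin n → ZMod 2,
        (cnt A H g / Nat.card ↥H) ^ 2
          + (if (QuotientAddGroup.mk g : (Fin n → ZMod 2) ⧸ H) ∈ T then ε^2 else 0)
        ≤ (1/(Nat.card ↥H : ℝ)) *
            ∑ t : ↥H, (cnt A H' ((t : Fin n → ZMod 2) + g) / Nat.card ↥H') ^ 2 := by
      intro g
      by_cases hg : (QuotientAddGroup.mk g : (Fin n → ZMod 2) ⧸ H) ∈ T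
      · rw [if_pos hg]
        obtain ⟨hη0, hηf⟩ := hηsel _ hg
        set η : ↥H →+ ZMod 2 := ηsel (QuotientAddGroup.mk g) with hηg
        have hmkeq : (QuotientAddGroup.mk g : (Fin n → ZMod 2) ⧸ H)
            = QuotientAddGroup.mk ((QuotientAddGroup.mk g : (Fin n → ZMod 2) ⧸ H)).out := by
          rw [QuotientAddGroup.out_eq']
        have hmem : -g + ((QuotientAddGroup.mk g : (Fin n → ZMod 2) ⧸ H)).out ∈ H :=
          QuotientAddGroup.eq.mp hmkeq
        set r := ((QuotientAddGroup.mk g : (Fin n → ZMod 2) ⧸ H)).out with hrdef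
        have hsub : g - r ∈ H := by
          have : g - r = -(-g + r) := by abel
          rw [this]
          exact neg_mem hmem
        have hgeq : (g - r) + r = g := by abel
        have hfg : ε * Nat.card ↥H < |fcoef A H g η| := by
          rw [← hgeq, fcoef_translate A hsub r]
          exact hηf
        have hle : H' ≤ η.ker.map H.subtype := by
          apply AddSubgroup.map_mono
          rw [hKHdef, hηg, hηdef]
          exact iInf₂_le _ hg
        exact point_gain A hη0 hle hε0 hfg
      · rw [if_neg hg, add_zero]
        exact point_mono A hH'le g
    -- count of covered elements
    have hScard : (Finset.univ.filter (fun g : Fin n → ZMod 2 =>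
        (QuotientAddGroup.mk g : (Fin n → ZMod 2) ⧸ H) ∈ T)).card = m * Nat.card ↥H := by
      rw [Finset.card_eq_sum_card_fiberwise
        (f := fun g => (QuotientAddGroup.mk g : (Fin n → ZMod 2) ⧸ H)) (t := T)
        (s := Finset.univ.filter (fun g : Fin n → ZMod 2 =>
          (QuotientAddGroup.mk g : (Fin n → ZMod 2) ⧸ H) ∈ T))
        (fun g hg => (Finset.mem_filter.mp hg).2)]
      have hfib : ∀ q ∈ T, ((Finset.univ.filter (fun g : Fin n → ZMod 2 =>
          (QuotientAddGroup.mk g : (Fin n → ZMod 2) ⧸ H) ∈ T)).filter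
            (fun g => (QuotientAddGroup.mk g : (Fin n → ZMod 2) ⧸ H) = q)).card
          = Nat.card ↥H := by
        intro q hq
        have heq : ((Finset.univ.filter (fun g : Fin n → ZMod 2 =>
            (QuotientAddGroup.mk g : (Fin n → ZMod 2) ⧸ H) ∈ T)).filter
              (fun g => (QuotientAddGroup.mk g : (Fin n → ZMod 2) ⧸ H) = q))
            = Finset.univ.filter (fun g : Fin n → ZMod 2 =>
              (QuotientAddGroup.mk g : (Fin n → ZMod 2) ⧸ H) = q) := by
          ext g
          simp only [Finset.mem_filter, Finset.mem_univ, true_and]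
          constructor
          · rintro ⟨_, h2⟩
            exact h2
          · intro h
            exact ⟨h ▸ hq, h⟩
        rw [heq]
        exact hfiltercard q
      rw [Finset.sum_congr rfl hfib, Finset.sum_const, smul_eq_mul, hTcard]
    -- assemble
    have hsum1 : ∑ g : Fin n → ZMod 2, ((cnt A H g / Nat.card ↥H) ^ 2
          + (if (QuotientAddGroup.mk g : (Fin n → ZMod 2) ⧸ H) ∈ T then ε^2 else 0))
        ≤ ∑ g : Fin n → ZMod 2, (1/(Nat.card ↥H : ℝ)) *
            ∑ t : ↥H, (cnt A H' ((t : Fin n → ZMod 2) + g) / Nat.card ↥H') ^ 2 :=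
      Finset.sum_le_sum fun g _ => key g
    have hswap : ∑ g : Fin n → ZMod 2, (1/(Nat.card ↥H : ℝ)) *
          ∑ t : ↥H, (cnt A H' ((t : Fin n → ZMod 2) + g) / Nat.card ↥H') ^ 2
        = ∑ g : Fin n → ZMod 2, (cnt A H' g / Nat.card ↥H') ^ 2 := by
      rw [← Finset.mul_sum, Finset.sum_comm]
      have htr : ∀ t : ↥H, ∑ g : Fin n → ZMod 2,
          (cnt A H' ((t : Fin n → ZMod 2) + g) / Nat.card ↥H') ^ 2
          = ∑ g : Fin n → ZMod 2, (cnt A H' g / Nat.card ↥H') ^ 2 :=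
        fun t => sum_translate_G (fun x => (cnt A H' x / Nat.card ↥H') ^ 2) _
      rw [Finset.sum_congr rfl (fun t _ => htr t), Finset.sum_const, Finset.card_univ,
        nsmul_eq_mul, ← mul_assoc, Nat.card_eq_fintype_card, one_div,
        inv_mul_cancel₀ (by exact_mod_cast Fintype.card_pos.ne'), one_mul]
    have hsplit : ∑ g : Fin n → ZMod 2, ((cnt A H g / Nat.card ↥H) ^ 2
          + (if (QuotientAddGroup.mk g : (Fin n → ZMod 2) ⧸ H) ∈ T then ε^2 else 0))
        = (∑ g : Fin n → ZMod 2, (cnt A H g / Nat.card ↥H) ^ 2)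
            + ε^2 * (m * Nat.card ↥H : ℕ) := by
      rw [Finset.sum_add_distrib]
      congr 1
      rw [Finset.sum_ite, Finset.sum_const, Finset.sum_const_zero, add_zero, nsmul_eq_mul,
        hScard, mul_comm]
    have hmain : (∑ g : Fin n → ZMod 2, (cnt A H g / Nat.card ↥H) ^ 2)
          + ε^2 * (m * Nat.card ↥H : ℕ)
        ≤ ∑ g : Fin n → ZMod 2, (cnt A H' g / Nat.card ↥H') ^ 2 := by
      rw [← hsplit, ← hswap]
      exact hsum1
    -- final arithmetic
    rw [ind_eq, ind_eq]
    have hm_gt : ε * (H.index : ℝ) < (m : ℝ) := by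
      have := Nat.lt_floor_add_one (ε * (H.index : ℝ))
      rw [hmdef]
      push_cast
      linarith
    have hNr : (Fintype.card (Fin n → ZMod 2) : ℝ) = (Nat.card ↥H : ℝ) * (H.index : ℝ) := by
      exact_mod_cast congrArg (Nat.cast : ℕ → ℝ) hNk.symm
    have hbound : ε ^ 3 * (Fintype.card (Fin n → ZMod 2) : ℝ)
        ≤ ε^2 * ((m : ℝ) * (Nat.card ↥H : ℝ)) := by
      rw [hNr]
      have h1 : ε ^ 3 * ((Nat.card ↥H : ℝ) * (H.index : ℝ))
          = ε^2 * ((ε * (H.index : ℝ)) * (Nat.card ↥H : ℝ)) := by ring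
      rw [h1]
      apply mul_le_mul_of_nonneg_left _ (by positivity)
      apply mul_le_mul_of_nonneg_right (le_of_lt hm_gt) (le_of_lt cardH_pos)
    have hfinal : (1 / (Fintype.card (Fin n → ZMod 2) : ℝ)) *
          (∑ g : Fin n → ZMod 2, (cnt A H g / Nat.card ↥H) ^ 2) + ε ^ 3
        ≤ (1 / (Fintype.card (Fin n → ZMod 2) : ℝ)) *
          ∑ g : Fin n → ZMod 2, (cnt A H' g / Nat.card ↥H') ^ 2 := by
      have hcast : ((m * Nat.card ↥H : ℕ) : ℝ) = (m : ℝ) * (Nat.card ↥H : ℝ) := by push_cast; rfl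
      rw [hcast] at hmain
      have h2 : (1 / (Fintype.card (Fin n → ZMod 2) : ℝ)) *
            ((∑ g : Fin n → ZMod 2, (cnt A H g / Nat.card ↥H) ^ 2)
              + ε^2 * ((m:ℝ) * (Nat.card ↥H : ℝ)))
          ≤ (1 / (Fintype.card (Fin n → ZMod 2) : ℝ)) *
            ∑ g : Fin n → ZMod 2, (cnt A H' g / Nat.card ↥H') ^ 2 :=
        mul_le_mul_of_nonneg_left hmain (by positivity)
      have h3 : (1 / (Fintype.card (Fin n → ZMod 2) : ℝ)) *
            (∑ g : Fin n → ZMod 2, (cnt A H g / Nat.card ↥H) ^ 2) + ε ^ 3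
          ≤ (1 / (Fintype.card (Fin n → ZMod 2) : ℝ)) *
            ((∑ g : Fin n → ZMod 2, (cnt A H g / Nat.card ↥H) ^ 2)
              + ε^2 * ((m:ℝ) * (Nat.card ↥H : ℝ))) := by
        rw [mul_add]
        have h4 : ε ^ 3 ≤ (1 / (Fintype.card (Fin n → ZMod 2) : ℝ)) *
            (ε^2 * ((m:ℝ) * (Nat.card ↥H : ℝ))) := by
          rw [show (1 / (Fintype.card (Fin n → ZMod 2) : ℝ)) *
              (ε^2 * ((m:ℝ) * (Nat.card ↥H : ℝ)))
            = (ε^2 * ((m:ℝ) * (Nat.card ↥H : ℝ))) / (Fintype.card (Fin n → ZMod 2) : ℝ)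
            from by ring, le_div_iff₀ hNpos]
          exact hbound
        linarith
      linarith
    exact hfinal

/-- Lemma 2.2. Let `G = (ℤ/2ℤ)ⁿ`, `A ⊆ G`, `H ≤ G`,
`ε ∈ (0,1/2)`. If `H` is not `ε`-regular for `A` (more than `εN` values of `g` fail
to be `ε`-regular), then there exists `H' ≤ H` with `|G/H'| ≤ 2^{|G/H|}` and
`ind(A;H') ≥ ind(A;H) + ε³`. -/
theorem index_increment {n : ℕ} (A : Set (Fin n → ZMod 2))
    (H : AddSubgroup (Fin n → ZMod 2)) (ε : ℝ) (hε0 : 0 < ε) (hε : ε < 1 / 2)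
    (hirr : ε * (Fintype.card (Fin n → ZMod 2) : ℝ) <
      (Nat.card {g : Fin n → ZMod 2 // ¬ IsRegularValue ε A H g} : ℝ)) :
    ∃ H' : AddSubgroup (Fin n → ZMod 2), H' ≤ H ∧ H'.index ≤ 2 ^ H.index ∧
      ind A H + ε ^ 3 ≤ ind A H' :=
  index_increment' A H ε hε0 hε hirr
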